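/- Let p ≥ 0 be real, λ > 0 real, γ, σ complex with σ ≠ 1, a real with a > 0, ϑ, υ complex with Re(υ) > Re(ϑ) > 0, z complex with |z| < 1, and t complex with |t| < a. Then the generating relation ∑_{n=0}^∞ ((σ)_n/n!) Φ_{γ,ϑ;υ}(z,σ+n,a;p,λ) · t^n = Φ_{γ,ϑ;υ}(z,σ,a−t;p,λ) holds. -/

import Mathlib

open MeasureTheory Set Filter Topology

/-- Mittag-Leffler function `E_λ(z) = ∑ z^n / Γ(λ n + 1)`. -/
noncomputable def mittagLeffler (lam : ℝ) (z : ℂ) : ℂ :=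
  ∑' n : ℕ, z ^ n / (Real.Gamma (lam * n + 1) : ℂ)

/-- Extended beta function `B(x,y;p,λ)`. -/
noncomputable def extBeta (x y : ℂ) (p lam : ℝ) : ℂ :=
  ∫ t in (0:ℝ)..1, (t : ℂ) ^ (x - 1) * ((1 : ℂ) - (t : ℂ)) ^ (y - 1) *
    mittagLeffler lam (-(p : ℂ) / ((t : ℂ) * (1 - (t : ℂ))))

/-- Classical beta function `B(x,y) = B(x,y;0,1)`. -/
noncomputable def classicalBeta (x y : ℂ) : ℂ := extBeta x y 0 1

/-- Pochhammer symbol `(x)_n = x (x+1) ⋯ (x+n-1)`. -/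
noncomputable def poch (x : ℂ) (n : ℕ) : ℂ := (ascPochhammer ℂ n).eval x

/-- Extended Hurwitz–Lerch zeta function `Φ_{γ,ϑ;υ}(z,σ,a;p,λ)`. -/
noncomputable def extHLZeta (γ ϑ υ z σ a : ℂ) (p lam : ℝ) : ℂ :=
  ∑' n : ℕ, poch γ n * extBeta (ϑ + n) (υ - ϑ) p lam /
    (classicalBeta ϑ (υ - ϑ) * (n.factorial : ℂ)) * z ^ n / ((n : ℂ) + a) ^ σ

/-- Extended Gauss hypergeometric function `F_p^λ(γ,ϑ;υ;z)`. -/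
noncomputable def extHyper (γ ϑ υ : ℂ) (p lam : ℝ) (z : ℂ) : ℂ :=
  ∑' n : ℕ, poch γ n * extBeta (ϑ + n) (υ - ϑ) p lam /
    classicalBeta ϑ (υ - ϑ) * z ^ n / (n.factorial : ℂ)

/-- Goyal–Laddha Hurwitz–Lerch zeta function `Φ*_γ(z,σ,a)`. -/
noncomputable def goyalLaddha (γ z σ a : ℂ) : ℂ :=
  ∑' n : ℕ, poch γ n / (n.factorial : ℂ) * z ^ n / ((n : ℂ) + a) ^ σ

/-- Limiting case `Φ*_{ϑ;υ}(z,σ,a;p,λ)`. -/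
noncomputable def limitHLZeta (ϑ υ z σ a : ℂ) (p lam : ℝ) : ℂ :=
  ∑' n : ℕ, extBeta (ϑ + n) (υ - ϑ) p lam /
    (classicalBeta ϑ (υ - ϑ) * (n.factorial : ℂ)) * z ^ n / ((n : ℂ) + a) ^ σ

/-- Garg Hurwitz–Lerch zeta function `Φ_{γ,ϑ;υ}(z,σ,a)`. -/
noncomputable def gargZeta (γ ϑ υ z σ a : ℂ) : ℂ :=
  ∑' n : ℕ, poch γ n * poch ϑ n / (poch υ n * (n.factorial : ℂ)) *
    z ^ n / ((n : ℂ) + a) ^ σ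

-- Auxiliary development
section Aux

lemma poch_succ (σ : ℂ) (n : ℕ) : poch σ (n+1) = poch σ n * (σ + n) := by
  unfold poch; rw [ascPochhammer_succ_right]; simp [Polynomial.eval_mul]

lemma poch_zero (σ : ℂ) : poch σ 0 = 1 := by simp [poch]

/-- ratio-test summability of `‖(σ)ₙ‖/n! (n+1)^k rⁿ`. -/
lemma aux_summable (σ : ℂ) {r : ℝ} (h0 : 0 ≤ r) (hr : r < 1) (k : ℕ) :
    Summable (fun n : ℕ => ‖poch σ n‖ / n.factorial * ((n : ℝ) + 1) ^ k * r ^ n) := by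
  rcases eq_or_lt_of_le h0 with h0 | h0
  · apply summable_of_ne_finset_zero (s := {0})
    intro n hn
    have : r ^ n = 0 := by rw [← h0]; exact zero_pow (by simpa using hn)
    simp [this]
  set l : ℝ := (1 + r) / 2 with hl
  have hl1 : l < 1 := by rw [hl]; linarith
  have hrl : r < l := by rw [hl]; linarith
  apply summable_of_ratio_norm_eventually_le hl1
  have tend : Tendsto (fun n : ℕ =>
      (1 + (‖σ‖ - 1) * (1 / ((n : ℝ) + 1))) * (1 + 1 / ((n : ℝ) + 1)) ^ k * r)
      atTop (𝓝 r) := by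
    have t1 := tendsto_one_div_add_atTop_nhds_zero_nat (𝕜 := ℝ)
    have A : Tendsto (fun n : ℕ => 1 + (‖σ‖ - 1) * (1 / ((n : ℝ) + 1))) atTop
        (𝓝 (1 + (‖σ‖ - 1) * 0)) := tendsto_const_nhds.add (t1.const_mul _)
    have B : Tendsto (fun n : ℕ => (1 + 1 / ((n : ℝ) + 1)) ^ k) atTop
        (𝓝 ((1 + 0) ^ k)) := (tendsto_const_nhds.add t1).pow k
    have := (A.mul B).mul_const r
    simpa using this
  filter_upwards [tend.eventually_lt_const hrl] with n hn
  have hn1 : (0:ℝ) < (n : ℝ) + 1 := by positivity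
  have h1 : 1 + (‖σ‖ - 1) * (1 / ((n : ℝ) + 1)) = (‖σ‖ + n) / ((n : ℝ) + 1) := by
    field_simp; ring
  have h2 : 1 + 1 / ((n : ℝ) + 1) = ((n : ℝ) + 2) / ((n : ℝ) + 1) := by
    field_simp; ring
  rw [h1, h2] at hn
  have key : (‖σ‖ + n) * ((n : ℝ) + 2) ^ k * r ≤ l * (((n : ℝ) + 1) * ((n : ℝ) + 1) ^ k) := by
    have e : (‖σ‖ + n) * ((n : ℝ) + 2) ^ k * r
        = ((‖σ‖ + n) / ((n : ℝ) + 1) * (((n : ℝ) + 2) / ((n : ℝ) + 1)) ^ k * r)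
          * (((n : ℝ) + 1) * ((n : ℝ) + 1) ^ k) := by
      field_simp
      rw [mul_assoc, div_pow, div_mul_cancel₀ _ (by positivity)]
    rw [e]
    exact mul_le_mul_of_nonneg_right hn.le (by positivity)
  have hfn : (0:ℝ) ≤ ‖poch σ n‖ / n.factorial * ((n : ℝ) + 1) ^ k * r ^ n := by positivity
  rw [Real.norm_of_nonneg hfn, Real.norm_of_nonneg (by positivity)]
  have hps : ‖poch σ (n+1)‖ ≤ ‖poch σ n‖ * (‖σ‖ + n) := by
    rw [poch_succ, norm_mul]
    refine mul_le_mul_of_nonneg_left ?_ (norm_nonneg _)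
    calc ‖σ + (n:ℂ)‖ ≤ ‖σ‖ + ‖(n:ℂ)‖ := norm_add_le _ _
      _ = ‖σ‖ + n := by rw [Complex.norm_natCast]
  have hfac : ((n+1).factorial : ℝ) = ((n:ℝ) + 1) * n.factorial := by
    rw [Nat.factorial_succ]; push_cast; ring
  have hfacpos : (0:ℝ) < n.factorial := by positivity
  push_cast
  calc ‖poch σ (n+1)‖ / ((n+1).factorial : ℝ) * (((n:ℝ) + 1) + 1) ^ k * r ^ (n+1)
      = ‖poch σ (n+1)‖ * (((n:ℝ) + 2) ^ k * (r ^ n * r) / (((n:ℝ) + 1) * n.factorial)) := by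
        rw [hfac]; ring
    _ ≤ (‖poch σ n‖ * (‖σ‖ + n)) * (((n:ℝ) + 2) ^ k * (r ^ n * r) / (((n:ℝ) + 1) * n.factorial)) := by
        refine mul_le_mul_of_nonneg_right hps (by positivity)
    _ = (‖poch σ n‖ * r ^ n / (((n:ℝ) + 1) * n.factorial)) * ((‖σ‖ + n) * ((n : ℝ) + 2) ^ k * r) := by
        ring
    _ ≤ (‖poch σ n‖ * r ^ n / (((n:ℝ) + 1) * n.factorial)) * (l * (((n : ℝ) + 1) * ((n : ℝ) + 1) ^ k)) := by
        refine mul_le_mul_of_nonneg_left key (by positivity)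
    _ = l * (‖poch σ n‖ / n.factorial * ((n : ℝ) + 1) ^ k * r ^ n) := by
        field_simp

section Binomial
variable (σ : ℂ)

private noncomputable def bc (σ : ℂ) (n : ℕ) : ℂ := poch σ n / (n.factorial : ℂ)

lemma bc_succ (n : ℕ) : bc σ (n+1) * (n+1) = bc σ n * (σ + n) := by
  unfold bc
  have h1 : ((n+1).factorial : ℂ) = ((n:ℂ) + 1) * (n.factorial : ℂ) := by
    rw [Nat.factorial_succ]; push_cast; ring
  rw [poch_succ, h1]
  have h2 : ((n:ℂ) + 1) ≠ 0 := by
    exact_mod_cast (Nat.cast_add_one_ne_zero n : ((n:ℂ) + 1) ≠ 0)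
  have h3 : (n.factorial : ℂ) ≠ 0 := Nat.cast_ne_zero.2 n.factorial_ne_zero
  field_simp

lemma bc_norm (n : ℕ) : ‖bc σ n‖ = ‖poch σ n‖ / n.factorial := by
  unfold bc
  rw [norm_div, Complex.norm_natCast]

lemma bc_succ_norm_le (n : ℕ) : ‖bc σ (n+1)‖ * ((n:ℝ)+1) ≤ ‖poch σ n‖ / n.factorial * (‖σ‖ + n) := by
  have := congrArg norm (bc_succ σ n)
  rw [norm_mul, norm_mul] at this
  have hcast : ‖((n:ℂ) + 1)‖ = (n:ℝ) + 1 := by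
    have : ((n:ℂ) + 1) = ((n+1 : ℕ) : ℂ) := by push_cast; ring
    rw [this, Complex.norm_natCast]; push_cast; ring
  rw [hcast] at this
  rw [this, bc_norm]
  refine mul_le_mul_of_nonneg_left ?_ (by positivity)
  calc ‖σ + (n:ℂ)‖ ≤ ‖σ‖ + ‖(n:ℂ)‖ := norm_add_le _ _
    _ = ‖σ‖ + n := by rw [Complex.norm_natCast]

lemma bc_summable {x : ℂ} (hx : ‖x‖ < 1) : Summable (fun n => bc σ n * x ^ n) := by
  apply Summable.of_norm
  have := aux_summable σ (norm_nonneg x) hx 0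
  refine this.congr fun n => ?_
  rw [norm_mul, norm_pow, bc_norm]
  ring

/-- summability of the (shifted) derivative-type series `‖bc (n+1)‖ (n+1) ρ^n`. -/
lemma bc_deriv_summable {ρ : ℝ} (h0 : 0 ≤ ρ) (hρ : ρ < 1) :
    Summable (fun n : ℕ => ‖bc σ (n+1)‖ * ((n:ℝ)+1) * ρ ^ n) := by
  have haux := (aux_summable σ h0 hρ 1).mul_left (‖σ‖ + 1)
  refine Summable.of_nonneg_of_le (fun n => by positivity) (fun n => ?_) haux
  have h1 : ‖bc σ (n+1)‖ * ((n:ℝ)+1) * ρ ^ n ≤ ‖poch σ n‖ / n.factorial * (‖σ‖ + n) * ρ ^ n :=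
    mul_le_mul_of_nonneg_right (bc_succ_norm_le σ n) (by positivity)
  refine h1.trans ?_
  have h2 : (‖σ‖ + (n:ℝ)) ≤ (‖σ‖ + 1) * ((n:ℝ)+1) := by nlinarith [norm_nonneg σ, Nat.cast_nonneg (α := ℝ) n]
  calc ‖poch σ n‖ / n.factorial * (‖σ‖ + n) * ρ ^ n
      ≤ ‖poch σ n‖ / n.factorial * ((‖σ‖ + 1) * ((n:ℝ)+1)) * ρ ^ n := by
        refine mul_le_mul_of_nonneg_right (mul_le_mul_of_nonneg_left h2 (by positivity)) (by positivity)
    _ = (‖σ‖ + 1) * (‖poch σ n‖ / n.factorial * ((n:ℝ)+1) ^ 1 * ρ ^ n) := by ring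

end Binomial

section BinomialMain
variable (σ : ℂ)

lemma bc_shift_summable {x : ℂ} (hx : ‖x‖ < 1) :
    Summable (fun n : ℕ => bc σ (n+1) * ((n:ℂ)+1) * x ^ n) := by
  apply Summable.of_norm
  refine (bc_deriv_summable σ (norm_nonneg x) hx).congr fun n => ?_
  rw [norm_mul, norm_mul, norm_pow]
  have hcast : ‖((n:ℂ) + 1)‖ = (n:ℝ) + 1 := by
    have h : ((n:ℂ) + 1) = ((n+1 : ℕ) : ℂ) := by push_cast; ring
    rw [h, Complex.norm_natCast]; push_cast; ring
  rw [hcast]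

lemma hasDerivAt_f {x : ℂ} (hx : ‖x‖ < 1) :
    HasDerivAt (fun y : ℂ => ∑' n, bc σ n * y ^ n)
      (∑' n : ℕ, bc σ (n+1) * ((n:ℂ)+1) * x ^ n) x := by
  set ρ : ℝ := (‖x‖ + 1)/2 with hρ
  have hxρ : ‖x‖ < ρ := by rw [hρ]; linarith
  have hρ0 : 0 < ρ := lt_of_le_of_lt (norm_nonneg x) hxρ
  have hρ1 : ρ < 1 := by rw [hρ]; linarith
  have main : HasDerivAt (fun y : ℂ => ∑' n, bc σ n * y ^ n)
      (∑' n : ℕ, bc σ n * ((n:ℂ) * x ^ (n-1))) x := by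
    apply hasDerivAt_tsum_of_isPreconnected
      (u := fun n : ℕ => ‖bc σ n‖ * n * ρ ^ (n-1)) (y₀ := (0:ℂ))
      ?_ (Metric.isOpen_ball) ((convex_ball (0:ℂ) ρ).isPreconnected)
      (fun n y _ => (hasDerivAt_pow n y).const_mul (bc σ n))
      ?_ (Metric.mem_ball_self hρ0) (bc_summable σ (by simpa using zero_lt_one))
      (mem_ball_zero_iff.2 hxρ)
    · -- Summable u
      apply (summable_nat_add_iff 1).1
      refine (bc_deriv_summable σ hρ0.le hρ1).congr fun n => ?_
      simp only [Nat.add_sub_cancel]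
      push_cast
      ring
    · -- bound
      intro n y hy
      rw [norm_mul, norm_mul, norm_pow, Complex.norm_natCast]
      have hyρ : ‖y‖ ≤ ρ := (mem_ball_zero_iff.1 hy).le
      have := pow_le_pow_left₀ (norm_nonneg y) hyρ (n-1)
      calc ‖bc σ n‖ * ((n:ℝ) * ‖y‖ ^ (n-1)) ≤ ‖bc σ n‖ * ((n:ℝ) * ρ ^ (n-1)) := by
            refine mul_le_mul_of_nonneg_left (mul_le_mul_of_nonneg_left this (by positivity)) (norm_nonneg _)
        _ = ‖bc σ n‖ * n * ρ ^ (n-1) := by ring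
  have hsum : Summable (fun n : ℕ => bc σ n * ((n:ℂ) * x ^ (n-1))) := by
    apply (summable_nat_add_iff 1).1
    refine (bc_shift_summable σ hx).congr fun n => ?_
    simp only [Nat.add_sub_cancel]
    push_cast
    ring
  have heq : (∑' n : ℕ, bc σ n * ((n:ℂ) * x ^ (n-1)))
      = ∑' n : ℕ, bc σ (n+1) * ((n:ℂ)+1) * x ^ n := by
    rw [hsum.tsum_eq_zero_add]
    simp only [Nat.cast_zero, zero_mul, mul_zero, zero_add]
    apply tsum_congr
    intro n
    simp only [Nat.add_sub_cancel]
    push_cast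
    ring
  exact heq ▸ main

lemma ode_f {x : ℂ} (hx : ‖x‖ < 1) :
    (1 - x) * (∑' n : ℕ, bc σ (n+1) * ((n:ℂ)+1) * x ^ n)
      = σ * ∑' n : ℕ, bc σ n * x ^ n := by
  have hS1 : Summable (fun n : ℕ => bc σ (n+1) * ((n:ℂ)+1) * x ^ n) := bc_shift_summable σ hx
  have hg : Summable (fun n : ℕ => bc σ n * (n:ℂ) * x ^ n) := by
    apply (summable_nat_add_iff 1).1
    refine (hS1.mul_right x).congr fun n => ?_
    push_cast
    ring
  have hxD : x * (∑' n : ℕ, bc σ (n+1) * ((n:ℂ)+1) * x ^ n)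
      = ∑' n : ℕ, bc σ n * (n:ℂ) * x ^ n := by
    rw [← tsum_mul_left, hg.tsum_eq_zero_add]
    simp only [Nat.cast_zero, mul_zero, zero_mul, zero_add]
    apply tsum_congr
    intro n
    push_cast
    ring
  calc (1 - x) * (∑' n : ℕ, bc σ (n+1) * ((n:ℂ)+1) * x ^ n)
      = (∑' n : ℕ, bc σ (n+1) * ((n:ℂ)+1) * x ^ n)
        - x * (∑' n : ℕ, bc σ (n+1) * ((n:ℂ)+1) * x ^ n) := by ring
    _ = (∑' n : ℕ, bc σ (n+1) * ((n:ℂ)+1) * x ^ n) - ∑' n : ℕ, bc σ n * (n:ℂ) * x ^ n := by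
        rw [hxD]
    _ = ∑' n : ℕ, (bc σ (n+1) * ((n:ℂ)+1) * x ^ n - bc σ n * (n:ℂ) * x ^ n) := by
        rw [Summable.tsum_sub hS1 hg]
    _ = ∑' n : ℕ, σ * (bc σ n * x ^ n) := by
        apply tsum_congr
        intro n
        have h := bc_succ σ n
        calc bc σ (n+1) * ((n:ℂ)+1) * x ^ n - bc σ n * (n:ℂ) * x ^ n
            = (bc σ (n+1) * ((n:ℂ)+1)) * x ^ n - bc σ n * (n:ℂ) * x ^ n := by ring
          _ = (bc σ n * (σ + n)) * x ^ n - bc σ n * (n:ℂ) * x ^ n := by rw [h]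
          _ = σ * (bc σ n * x ^ n) := by ring
    _ = σ * ∑' n : ℕ, bc σ n * x ^ n := tsum_mul_left

lemma hasSum_binomial {w : ℂ} (hw : ‖w‖ < 1) :
    HasSum (fun n : ℕ => poch σ n / (n.factorial : ℂ) * w ^ n) ((1 - w) ^ (-σ)) := by
  have key : ∀ x : ℂ, ‖x‖ < 1 → (∑' n : ℕ, bc σ n * x ^ n) * (1-x) ^ σ = 1 := by
    intro x hx
    have hderiv : ∀ y : ℂ, ‖y‖ < 1 →
        HasDerivAt (fun z : ℂ => (∑' n : ℕ, bc σ n * z ^ n) * (1-z) ^ σ) 0 y := by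
      intro y hy
      have hre : 0 < (1 - y).re := by
        have := Complex.abs_re_le_norm y
        simp only [Complex.sub_re, Complex.one_re]
        have : y.re ≤ ‖y‖ := (le_abs_self _).trans (by simpa using this)
        linarith
      have h1y : (1 - y) ∈ Complex.slitPlane := Or.inl hre
      have h1y0 : (1:ℂ) - y ≠ 0 := Complex.slitPlane_ne_zero h1y
      have hc : HasDerivAt (fun z : ℂ => (1-z) ^ σ) (σ * (1-y) ^ (σ-1) * (-1)) y := by
        have h0 := HasDerivAt.cpow_const (c := σ) ((hasDerivAt_id y).const_sub 1) h1y
        simpa using h0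
      have hmul := (hasDerivAt_f σ hy).mul hc
      have hval : (∑' n : ℕ, bc σ (n+1) * ((n:ℂ)+1) * y ^ n) * (1-y) ^ σ
          + (∑' n : ℕ, bc σ n * y ^ n) * (σ * (1-y) ^ (σ-1) * (-1)) = 0 := by
        have hpow : (1-y) ^ σ = (1-y) ^ (σ-1) * (1-y) := by
          conv_lhs => rw [show σ = (σ-1)+1 by ring]
          rw [Complex.cpow_add _ _ h1y0, Complex.cpow_one]
        rw [hpow]
        have hode := ode_f σ hy
        calc (∑' n : ℕ, bc σ (n+1) * ((n:ℂ)+1) * y ^ n) * ((1-y) ^ (σ-1) * (1-y))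
              + (∑' n : ℕ, bc σ n * y ^ n) * (σ * (1-y) ^ (σ-1) * (-1))
            = (1-y) ^ (σ-1) * ((1-y) * (∑' n : ℕ, bc σ (n+1) * ((n:ℂ)+1) * y ^ n))
              - (1-y) ^ (σ-1) * (σ * ∑' n : ℕ, bc σ n * y ^ n) := by ring
          _ = 0 := by rw [hode]; ring
      exact hval ▸ hmul
    set F := fun z : ℂ => (∑' n : ℕ, bc σ n * z ^ n) * (1-z) ^ σ with hF
    have seg : ∀ s : ℝ, s ∈ Set.Icc (0:ℝ) 1 → ‖(s:ℂ) * x‖ < 1 := by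
      intro s hs
      rw [norm_mul, Complex.norm_real]
      have h1 : ‖s‖ ≤ 1 := by rw [Real.norm_eq_abs, abs_le]; exact ⟨by linarith [hs.1], hs.2⟩
      calc ‖s‖ * ‖x‖ ≤ 1 * ‖x‖ := mul_le_mul_of_nonneg_right h1 (norm_nonneg x)
        _ < 1 := by simpa using hx
    have hφ : ∀ s ∈ Set.Icc (0:ℝ) 1, HasDerivAt (fun u : ℝ => F ((u:ℂ) * x)) 0 s := by
      intro s hs
      have hz : HasDerivAt (fun z : ℂ => z * x) x (s:ℂ) := by
        simpa using (hasDerivAt_id (s:ℂ)).mul_const x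
      have h1 : HasDerivAt (fun z : ℂ => F (z * x)) 0 (s:ℂ) := by
        have := (hderiv _ (seg s hs)).comp (s:ℂ) hz
        rw [zero_mul] at this
        exact this
      exact h1.comp_ofReal
    have hcont : ContinuousOn (fun u : ℝ => F ((u:ℂ) * x)) (Set.Icc 0 1) :=
      fun s hs => (hφ s hs).continuousAt.continuousWithinAt
    have hconst := constant_of_has_deriv_right_zero hcont
      (fun s hs => (hφ s (Set.mem_Icc_of_Ico hs)).hasDerivWithinAt)
    have h10 : F ((1:ℂ) * x) = F ((0:ℂ) * x) := by
      have := hconst 1 (by norm_num)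
      simpa using this
    have hF0 : F 0 = 1 := by
      have hf0 : (∑' n : ℕ, bc σ n * (0:ℂ) ^ n) = 1 := by
        rw [tsum_eq_single 0 (fun n hn => by simp [zero_pow hn])]
        simp [bc, poch_zero]
      simp [hF, hf0]
    have : F x = 1 := by
      rw [show F x = F ((1:ℂ) * x) by norm_num, h10]
      simpa using hF0
    exact this
  have h1w0 : (1:ℂ) - w ≠ 0 := by
    intro h
    have : (1:ℂ) = w := by linear_combination h
    rw [← this] at hw
    simp at hw
  have hne : (1-w) ^ σ ≠ 0 := by
    rw [Ne, Complex.cpow_eq_zero_iff]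
    rintro ⟨h1, -⟩
    exact h1w0 h1
  have hval : (∑' n : ℕ, bc σ n * w ^ n) = (1-w) ^ (-σ) := by
    rw [Complex.cpow_neg]
    field_simp
    linear_combination (key w hw)
  have := (bc_summable σ hw).hasSum
  rw [hval] at this
  simpa [bc] using this

end BinomialMain


private noncomputable def betaInt (ϑ υ : ℂ) (p lam : ℝ) (n : ℕ) (s : ℝ) : ℂ :=
  (s : ℂ) ^ (ϑ + n - 1) * ((1 : ℂ) - (s : ℂ)) ^ ((υ - ϑ) - 1) *
    mittagLeffler lam (-(p : ℂ) / ((s : ℂ) * (1 - (s : ℂ))))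

lemma extBeta_eq_betaInt (ϑ υ : ℂ) (p lam : ℝ) (k : ℕ) :
    extBeta (ϑ + k) (υ - ϑ) p lam = ∫ s in (0:ℝ)..1, betaInt ϑ υ p lam k s := rfl

lemma extBeta_norm_bound (ϑ υ : ℂ) (p lam : ℝ) :
    ∃ N : ℕ, ∃ C : ℝ, 0 ≤ C ∧ ∀ k, N ≤ k → ‖extBeta (ϑ + k) (υ - ϑ) p lam‖ ≤ C := by
  by_cases hall : ∀ n : ℕ, ¬ IntervalIntegrable (betaInt ϑ υ p lam n) volume 0 1
  · refine ⟨0, 0, le_refl 0, fun k _ => ?_⟩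
    rw [extBeta_eq_betaInt, intervalIntegral.integral_undef (hall k)]
    simp
  push_neg at hall
  obtain ⟨N, hN⟩ := hall
  refine ⟨N, ∫ s in (0:ℝ)..1, ‖betaInt ϑ υ p lam N s‖, ?_, ?_⟩
  · exact intervalIntegral.integral_nonneg (by norm_num) (fun s _ => norm_nonneg _)
  intro k hk
  have hfac : ∀ s ∈ Set.Ioc (0:ℝ) 1,
      betaInt ϑ υ p lam k s = (s:ℂ) ^ (k - N) * betaInt ϑ υ p lam N s := by
    intro s hs
    have hs0 : (s:ℂ) ≠ 0 := by
      simp only [Ne, Complex.ofReal_eq_zero]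
      exact ne_of_gt hs.1
    have hcast : ((k - N : ℕ) : ℂ) = (k : ℂ) - (N : ℂ) := by
      exact Nat.cast_sub hk
    have hexp : ϑ + (k:ℂ) - 1 = (ϑ + (N:ℂ) - 1) + ((k - N : ℕ) : ℂ) := by
      rw [hcast]; ring
    have hpow : (s:ℂ) ^ (ϑ + (k:ℂ) - 1)
        = (s:ℂ) ^ (ϑ + (N:ℂ) - 1) * (s:ℂ) ^ (k - N : ℕ) := by
      rw [hexp, Complex.cpow_add _ _ hs0, Complex.cpow_natCast]
    unfold betaInt
    rw [hpow]
    ring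
  have hbd : ∀ s ∈ Set.Ioc (0:ℝ) 1,
      ‖betaInt ϑ υ p lam k s‖ ≤ ‖betaInt ϑ υ p lam N s‖ := by
    intro s hs
    rw [hfac s hs, norm_mul]
    have h1 : ‖(s:ℂ) ^ (k - N)‖ ≤ 1 := by
      rw [norm_pow, Complex.norm_real, Real.norm_eq_abs, abs_of_pos hs.1]
      exact pow_le_one₀ hs.1.le hs.2
    calc ‖(s:ℂ) ^ (k - N)‖ * ‖betaInt ϑ υ p lam N s‖
        ≤ 1 * ‖betaInt ϑ υ p lam N s‖ := mul_le_mul_of_nonneg_right h1 (norm_nonneg _)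
      _ = _ := one_mul _
  have hkInt : IntervalIntegrable (betaInt ϑ υ p lam k) volume 0 1 := by
    rw [intervalIntegrable_iff_integrableOn_Ioc_of_le (by norm_num : (0:ℝ) ≤ 1)]
    have hN' := (intervalIntegrable_iff_integrableOn_Ioc_of_le (by norm_num : (0:ℝ) ≤ 1)).1 hN
    refine Integrable.mono hN' ?_ ?_
    · have hmono : Continuous (fun s : ℝ => (s:ℂ) ^ (k - N)) :=
        (Complex.continuous_ofReal.pow _)
      refine AEStronglyMeasurable.congr
        (hmono.aestronglyMeasurable.mul hN'.aestronglyMeasurable) ?_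
      exact (ae_restrict_iff' measurableSet_Ioc).2 (ae_of_all _ (fun s hs => (hfac s hs).symm))
    · filter_upwards [ae_restrict_mem measurableSet_Ioc] with s hs
      exact hbd s hs
  rw [extBeta_eq_betaInt]
  calc ‖∫ s in (0:ℝ)..1, betaInt ϑ υ p lam k s‖
      ≤ ∫ s in (0:ℝ)..1, ‖betaInt ϑ υ p lam k s‖ :=
        intervalIntegral.norm_integral_le_integral_norm (by norm_num)
    _ ≤ ∫ s in (0:ℝ)..1, ‖betaInt ϑ υ p lam N s‖ := by
        refine intervalIntegral.integral_mono_ae_restrict (by norm_num) hkInt.norm hN.norm ?_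
        have h0 : ∀ᵐ s : ℝ ∂volume, s ≠ 0 := by
          rw [ae_iff]
          have : {s : ℝ | ¬ s ≠ 0} = {0} := by ext s; simp
          rw [this]
          exact Real.volume_singleton
        filter_upwards [ae_restrict_mem measurableSet_Icc, ae_restrict_of_ae h0] with s hs hs0
        have hsIoc : s ∈ Set.Ioc (0:ℝ) 1 := ⟨lt_of_le_of_ne hs.1 (Ne.symm hs0), hs.2⟩
        exact hbd s hsIoc

lemma ofReal_mul_cpow {x : ℝ} (hx : 0 < x) (u s : ℂ) :
    ((x:ℂ) * u) ^ s = (x:ℂ) ^ s * u ^ s := by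
  rcases eq_or_ne u 0 with rfl | hu
  · rcases eq_or_ne s 0 with rfl | hs
    · simp
    · rw [mul_zero, Complex.zero_cpow hs, mul_zero]
  · have hx0 : (x:ℂ) ≠ 0 := by
      simp only [Ne, Complex.ofReal_eq_zero]; exact hx.ne'
    have hlog : Complex.log ((x:ℂ) * u) = Complex.log x + Complex.log u := by
      apply Complex.ext
      · rw [Complex.add_re, Complex.log_re, Complex.log_re, Complex.log_re]
        rw [norm_mul]
        rw [Real.log_mul (by simpa using hx.ne') (by simpa using hu)]
      · rw [Complex.add_im, Complex.log_im, Complex.log_im, Complex.log_im]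
        rw [Complex.arg_real_mul u hx, Complex.arg_ofReal_of_nonneg hx.le, zero_add]
    rw [Complex.cpow_def_of_ne_zero (mul_ne_zero hx0 hu), Complex.cpow_def_of_ne_zero hx0,
      Complex.cpow_def_of_ne_zero hu, hlog, add_mul, Complex.exp_add]

lemma rpow_linear_bound {a : ℝ} (ha : 0 < a) (x : ℝ) :
    ∃ M : ℝ, 0 ≤ M ∧ ∃ m : ℕ, ∀ k : ℕ, ((k:ℝ) + a) ^ x ≤ M * ((k:ℝ) + 1) ^ m := by
  rcases le_or_gt x 0 with hx | hx
  · refine ⟨a ^ x, Real.rpow_nonneg ha.le x, 0, fun k => ?_⟩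
    have hb : a ≤ (k:ℝ) + a := le_add_of_nonneg_left (Nat.cast_nonneg k)
    have h1 : a ^ (-x) ≤ ((k:ℝ) + a) ^ (-x) :=
      Real.rpow_le_rpow ha.le hb (neg_nonneg.2 hx)
    rw [Real.rpow_neg ha.le, Real.rpow_neg (by positivity)] at h1
    have h2 : ((k:ℝ) + a) ^ x ≤ a ^ x :=
      (inv_le_inv₀ (Real.rpow_pos_of_pos ha x) (Real.rpow_pos_of_pos (by positivity) x)).1 h1
    simpa using h2
  · refine ⟨(max 1 a) ^ x, Real.rpow_nonneg (by positivity) x, ⌈x⌉₊, fun k => ?_⟩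
    have hk0 : (0:ℝ) ≤ (k:ℝ) := Nat.cast_nonneg k
    have hm1 : (1:ℝ) ≤ max 1 a := le_max_left 1 a
    have hma : a ≤ max 1 a := le_max_right 1 a
    have h1 : ((k:ℝ) + a) ≤ ((k:ℝ) + 1) * max 1 a := by nlinarith
    have h2 : ((k:ℝ) + a) ^ x ≤ (((k:ℝ) + 1) * max 1 a) ^ x :=
      Real.rpow_le_rpow (by positivity) h1 hx.le
    rw [Real.mul_rpow (by positivity) (by positivity)] at h2
    have h3 : ((k:ℝ) + 1) ^ x ≤ ((k:ℝ) + 1) ^ (⌈x⌉₊ : ℝ) :=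
      Real.rpow_le_rpow_of_exponent_le (by linarith) (Nat.le_ceil x)
    rw [Real.rpow_natCast] at h3
    calc ((k:ℝ) + a) ^ x ≤ ((k:ℝ) + 1) ^ x * (max 1 a) ^ x := h2
      _ ≤ ((k:ℝ) + 1) ^ (⌈x⌉₊) * (max 1 a) ^ x :=
          mul_le_mul_of_nonneg_right h3 (Real.rpow_nonneg (by positivity) x)
      _ = (max 1 a) ^ x * ((k:ℝ) + 1) ^ (⌈x⌉₊) := mul_comm _ _



private noncomputable def dcoef (γ ϑ υ z : ℂ) (p lam : ℝ) (k : ℕ) : ℂ :=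
  poch γ k * extBeta (ϑ + k) (υ - ϑ) p lam /
    (classicalBeta ϑ (υ - ϑ) * (k.factorial : ℂ)) * z ^ k

private lemma extHLZeta_eq_dcoef (γ ϑ υ z σ A : ℂ) (p lam : ℝ) :
    extHLZeta γ ϑ υ z σ A p lam = ∑' k : ℕ, dcoef γ ϑ υ z p lam k / ((k : ℂ) + A) ^ σ := rfl

private noncomputable def Gfun (γ ϑ υ z σ t : ℂ) (a : ℝ) (p lam : ℝ) (n k : ℕ) : ℂ :=
  poch σ n / (n.factorial : ℂ) * (dcoef γ ϑ υ z p lam k / ((k : ℂ) + (a : ℂ)) ^ (σ + n)) * t ^ n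


end Aux

/-- generating relation in the parameter `σ`. -/
theorem extHLZeta_generating_sigma (p lam a : ℝ) (γ σ ϑ υ z t : ℂ)
    (hp : 0 ≤ p) (hlam : 0 < lam) (hσ : σ ≠ 1) (ha : 0 < a)
    (hϑ : 0 < ϑ.re) (hυϑ : ϑ.re < υ.re) (hz : ‖z‖ < 1)
    (ht : ‖t‖ < a) :
    (∑' n : ℕ, poch σ n / (n.factorial : ℂ) *
        extHLZeta γ ϑ υ z (σ + n) (a : ℂ) p lam * t ^ n) =
      extHLZeta γ ϑ υ z σ ((a : ℂ) - t) p lam := by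
  have ht' : ‖t‖ < a := ht
  have hz' : ‖z‖ < 1 := hz
  have hxk : ∀ k : ℕ, (0:ℝ) < (k:ℝ) + a := fun k => by positivity
  -- Step 1: rewrite each summand as an inner tsum
  have hstep1 : ∀ n : ℕ, poch σ n / (n.factorial : ℂ) *
      extHLZeta γ ϑ υ z (σ + n) (a : ℂ) p lam * t ^ n
      = ∑' k : ℕ, Gfun γ ϑ υ z σ t a p lam n k := by
    intro n
    rw [extHLZeta_eq_dcoef γ ϑ υ z (σ + n) (a:ℂ) p lam, ← tsum_mul_left, ← tsum_mul_right]
    rfl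
  -- Step 2: summability of the double series
  obtain ⟨N, C, hC0, hC⟩ := extBeta_norm_bound ϑ υ p lam
  obtain ⟨M, hM0, m, hMb⟩ := rpow_linear_bound ha (-σ.re)
  set A : ℕ → ℝ := fun n => ‖poch σ n‖ / n.factorial * (‖t‖ / a) ^ n with hA
  set Bk : ℕ → ℝ := fun k => ‖dcoef γ ϑ υ z p lam k‖ * ((k:ℝ) + a) ^ (-σ.re) with hBk
  have hAsum : Summable A := by
    have h1 : ‖t‖ / a < 1 := (div_lt_one ha).2 ht'
    have := aux_summable σ (by positivity) h1 0
    refine this.congr fun n => ?_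
    rw [hA]; simp
  have hdnorm : ∀ k : ℕ, ‖dcoef γ ϑ υ z p lam k‖
      = ‖poch γ k‖ * ‖extBeta (ϑ + k) (υ - ϑ) p lam‖
        / (‖classicalBeta ϑ (υ - ϑ)‖ * k.factorial) * ‖z‖ ^ k := by
    intro k
    unfold dcoef
    rw [norm_mul, norm_div, norm_mul, norm_mul, norm_pow, Complex.norm_natCast]
  have hBksum : Summable Bk := by
    rw [← summable_nat_add_iff N]
    set cst : ℝ := C * M / ‖classicalBeta ϑ (υ - ϑ)‖ with hcst
    have hcst0 : 0 ≤ cst := by positivity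
    have haux := (aux_summable γ (norm_nonneg z) hz' m).mul_left cst
    refine Summable.of_nonneg_of_le (fun k => by rw [hBk]; positivity)
      (fun k => ?_) ((summable_nat_add_iff N).2 haux)
    have hkN : N ≤ k + N := le_add_self
    have hEb := hC (k + N) hkN
    rw [hBk]
    simp only []
    rw [hdnorm (k + N)]
    have hrp : (((k + N : ℕ):ℝ) + a) ^ (-σ.re) ≤ M * (((k + N : ℕ):ℝ) + 1) ^ m := hMb (k + N)
    have hfact : (0:ℝ) < (k + N).factorial := by positivity
    have hB0 : (0:ℝ) ≤ ‖classicalBeta ϑ (υ - ϑ)‖ := norm_nonneg _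
    calc ‖poch γ (k + N)‖ * ‖extBeta (ϑ + (k + N : ℕ)) (υ - ϑ) p lam‖
          / (‖classicalBeta ϑ (υ - ϑ)‖ * (k + N).factorial) * ‖z‖ ^ (k + N)
          * (((k + N : ℕ):ℝ) + a) ^ (-σ.re)
        ≤ ‖poch γ (k + N)‖ * C
          / (‖classicalBeta ϑ (υ - ϑ)‖ * (k + N).factorial) * ‖z‖ ^ (k + N)
          * (M * (((k + N : ℕ):ℝ) + 1) ^ m) := by
          gcongr
      _ = cst * (‖poch γ (k + N)‖ / (k + N).factorial * (((k + N : ℕ):ℝ) + 1) ^ m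
            * ‖z‖ ^ (k + N)) := by
          rw [hcst]
          simp only [div_eq_mul_inv, mul_inv]
          ring
  -- Step 3: termwise norm bound
  have hGnorm : ∀ n k : ℕ, ‖Gfun γ ϑ υ z σ t a p lam n k‖ ≤ A n * Bk k := by
    intro n k
    have hX := hxk k
    have hcast : ((k:ℂ) + (a:ℂ)) = ((((k:ℝ) + a) : ℝ) : ℂ) := by push_cast; ring
    have h1 : ‖((k:ℂ) + (a:ℂ)) ^ (σ + (n:ℂ))‖ = ((k:ℝ) + a) ^ σ.re * ((k:ℝ) + a) ^ n := by
      rw [hcast, Complex.norm_cpow_eq_rpow_re_of_pos hX]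
      have h2 : (σ + (n:ℂ)).re = σ.re + n := by simp
      rw [h2, Real.rpow_add hX, Real.rpow_natCast]
    have hGn : ‖Gfun γ ϑ υ z σ t a p lam n k‖
        = ‖poch σ n‖ / n.factorial * (‖dcoef γ ϑ υ z p lam k‖
            / (((k:ℝ) + a) ^ σ.re * ((k:ℝ) + a) ^ n)) * ‖t‖ ^ n := by
      unfold Gfun
      rw [norm_mul, norm_mul, norm_div, norm_div, norm_pow, Complex.norm_natCast, h1]
    rw [hGn, hA, hBk]
    simp only []
    rw [Real.rpow_neg hX.le, div_pow]
    have hkc : (0:ℝ) ≤ (k:ℝ) := Nat.cast_nonneg k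
    have base : ‖t‖ ^ n / ((k:ℝ) + a) ^ n ≤ ‖t‖ ^ n / a ^ n := by
      gcongr
      linarith
    have hs0 : (0:ℝ) ≤ (((k:ℝ) + a) ^ σ.re)⁻¹ := by positivity
    calc ‖poch σ n‖ / n.factorial * (‖dcoef γ ϑ υ z p lam k‖
            / (((k:ℝ) + a) ^ σ.re * ((k:ℝ) + a) ^ n)) * ‖t‖ ^ n
        = ‖poch σ n‖ / n.factorial * ‖dcoef γ ϑ υ z p lam k‖ * (((k:ℝ) + a) ^ σ.re)⁻¹
            * (‖t‖ ^ n / ((k:ℝ) + a) ^ n) := by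
          simp only [div_eq_mul_inv, mul_inv]
          ring
      _ ≤ ‖poch σ n‖ / n.factorial * ‖dcoef γ ϑ υ z p lam k‖ * (((k:ℝ) + a) ^ σ.re)⁻¹
            * (‖t‖ ^ n / a ^ n) := by
          refine mul_le_mul_of_nonneg_left base (by positivity)
      _ = ‖poch σ n‖ / n.factorial * (‖t‖ ^ n / a ^ n)
            * (‖dcoef γ ϑ υ z p lam k‖ * (((k:ℝ) + a) ^ σ.re)⁻¹) := by ring
  -- Step 4: double summability
  have hGsum : Summable (Function.uncurry (Gfun γ ϑ υ z σ t a p lam)) := by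
    apply Summable.of_norm
    refine Summable.of_nonneg_of_le (fun q => norm_nonneg _) (fun q => hGnorm q.1 q.2) ?_
    exact hAsum.mul_of_nonneg hBksum
      (fun n => by rw [hA]; dsimp only; positivity)
      (fun k => by rw [hBk]; dsimp only; positivity)
  -- Step 5: per-k has-sum via the binomial series
  have hhas : ∀ k : ℕ, HasSum (fun n => Gfun γ ϑ υ z σ t a p lam n k)
      (dcoef γ ϑ υ z p lam k / ((k:ℂ) + ((a:ℂ) - t)) ^ σ) := by
    intro k
    have hX : (0:ℝ) < (k:ℝ) + a := hxk k
    have hXc : ((((k:ℝ) + a) : ℝ) : ℂ) ≠ 0 := by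
      simp only [Ne, Complex.ofReal_eq_zero]; exact hX.ne'
    have hkc : (0:ℝ) ≤ (k:ℝ) := Nat.cast_nonneg k
    have hw : ‖t / ((((k:ℝ) + a) : ℝ) : ℂ)‖ < 1 := by
      rw [norm_div, Complex.norm_real, Real.norm_eq_abs, abs_of_pos hX, div_lt_one hX]
      linarith
    have hbin := (hasSum_binomial σ hw).mul_left
      (dcoef γ ϑ υ z p lam k * ((((k:ℝ) + a) : ℝ) : ℂ) ^ (-σ))
    have hcast2 : ((k:ℂ) + (a:ℂ)) = ((((k:ℝ) + a) : ℝ) : ℂ) := by push_cast; ring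
    have hσne : ((((k:ℝ) + a) : ℝ) : ℂ) ^ σ ≠ 0 := by
      rw [Ne, Complex.cpow_eq_zero_iff]
      rintro ⟨h1, -⟩
      exact hXc h1
    have hterm : ∀ n : ℕ,
        dcoef γ ϑ υ z p lam k * ((((k:ℝ) + a) : ℝ) : ℂ) ^ (-σ)
          * (poch σ n / (n.factorial : ℂ) * (t / ((((k:ℝ) + a) : ℝ) : ℂ)) ^ n)
        = Gfun γ ϑ υ z σ t a p lam n k := by
      intro n
      unfold Gfun
      rw [hcast2, Complex.cpow_add _ _ hXc, Complex.cpow_natCast, Complex.cpow_neg, div_pow]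
      have h2 : ((((k:ℝ) + a) : ℝ) : ℂ) ^ n ≠ 0 := pow_ne_zero _ hXc
      field_simp
    have hvalue : dcoef γ ϑ υ z p lam k * ((((k:ℝ) + a) : ℝ) : ℂ) ^ (-σ)
        * (1 - t / ((((k:ℝ) + a) : ℝ) : ℂ)) ^ (-σ)
        = dcoef γ ϑ υ z p lam k / ((k:ℂ) + ((a:ℂ) - t)) ^ σ := by
      have hcast3 : ((k:ℂ) + ((a:ℂ) - t)) = ((((k:ℝ) + a) : ℝ) : ℂ) - t := by push_cast; ring
      have htX : ((((k:ℝ) + a) : ℝ) : ℂ) * (t / ((((k:ℝ) + a) : ℝ) : ℂ)) = t := by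
        rw [mul_comm, div_mul_cancel₀ t hXc]
      have hfact2 : ((((k:ℝ) + a) : ℝ) : ℂ) - t
          = ((((k:ℝ) + a) : ℝ) : ℂ) * (1 - t / ((((k:ℝ) + a) : ℝ) : ℂ)) := by
        rw [mul_sub, mul_one, htX]
      rw [hcast3, hfact2, ofReal_mul_cpow hX (1 - t / ((((k:ℝ) + a) : ℝ) : ℂ)) σ]
      simp only [Complex.cpow_neg, div_eq_mul_inv, mul_inv]
      ring
    simp only [hterm] at hbin
    rw [hvalue] at hbin
    exact hbin
  -- Final assembly
  calc (∑' n : ℕ, poch σ n / (n.factorial : ℂ) *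
        extHLZeta γ ϑ υ z (σ + n) (a : ℂ) p lam * t ^ n)
      = ∑' n : ℕ, ∑' k : ℕ, Gfun γ ϑ υ z σ t a p lam n k := tsum_congr hstep1
    _ = ∑' k : ℕ, ∑' n : ℕ, Gfun γ ϑ υ z σ t a p lam n k := (Summable.tsum_comm hGsum).symm
    _ = ∑' k : ℕ, dcoef γ ϑ υ z p lam k / ((k:ℂ) + ((a:ℂ) - t)) ^ σ :=
        tsum_congr fun k => (hhas k).tsum_eq
    _ = extHLZeta γ ϑ υ z σ ((a : ℂ) - t) p lam :=
        (extHLZeta_eq_dcoef γ ϑ υ z σ ((a:ℂ) - t) p lam).symm
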